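/- Let ξ be an indeterminate and let Φ : ℂ[x,y] → ℂ[ξ][x,x⁻¹] be the ℂ-algebra homomorphism with Φ(x) = x and Φ(y) = x⁻¹ + ξx⁻² (Φ is injective). For nonzero f ∈ ℂ[x,y] define δ(f) := deg_x(Φ(f)), the largest exponent of x occurring in Φ(f). Then: (a) δ(f) ≥ −deg(f) for every f ∈ ℂ[x,y] \ ℂ; (b) δ(y) = −1 and deg(y) = 1, so min{δ(f)/deg(f) : f ∈ ℂ[x,y] \ ℂ} = −1; and (c) deg_x(Φ(y) − x⁻¹) = −2, so the minimum in (b) is strictly greater than δ(y − x⁻¹)/deg(y − x⁻¹) = −2, where y − x⁻¹ is the last key form of δ. In particular, the skewness identity α(δ) = inf{δ(f)/(d_δ·deg f) : f ∈ ℂ[x,y] \ ℂ} fails for this δ, since α(δ) = −2 while the infimum equals −1. -/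

import Mathlib

open Polynomial LaurentPolynomial

noncomputable section

set_option maxHeartbeats 1000000
set_option synthInstance.maxHeartbeats 400000

/-- The polynomial ring `ℂ[x,y]`, with `x = X 0` and `y = X 1`. -/
abbrev Pxy : Type := MvPolynomial (Fin 2) ℂ

/-- The Laurent polynomial ring `ℂ[ξ][x,x⁻¹]` (`ξ = Polynomial.X`). -/
abbrev LPx : Type := LaurentPolynomial (Polynomial ℂ)

/-- For a nonzero `h ∈ ℂ[ξ][x,x⁻¹]`, the largest exponent of `x` occurring in `h`. -/
def degx (h : LPx) : ℤ := sSup {k : ℤ | h.coeff k ≠ 0}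

/-- The ℂ-algebra homomorphism `Φ : ℂ[x,y] → ℂ[ξ][x,x⁻¹]` with `Φ x = x` and
`Φ y = x⁻¹ + ξ x⁻²`. -/
noncomputable def Phi : Pxy →ₐ[ℂ] LPx :=
  MvPolynomial.aeval
    ![LaurentPolynomial.T 1,
      LaurentPolynomial.T (-1) + LaurentPolynomial.C Polynomial.X * LaurentPolynomial.T (-2)]

/-- The set `{δ(f)/deg(f) : f ∈ ℂ[x,y] \ ℂ} ⊆ ℝ` for `δ f := deg_x (Φ f)` and `deg` the total
degree. -/
def ratioSet : Set ℝ :=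
  {r : ℝ | ∃ f : Pxy, (¬ ∃ c : ℂ, f = MvPolynomial.C c) ∧
    r = (degx (Phi f) : ℝ) / (f.totalDegree : ℝ)}

namespace SkewAux

local notation "LC" => LaurentPolynomial.C (R := Polynomial ℂ)

/-- Expansion of `Φ` on a monomial `x^i y^j`. -/
lemma phi_monomial (s : Fin 2 →₀ ℕ) (c : ℂ) :
    Phi (MvPolynomial.monomial s c) =
      ∑ t ∈ Finset.range (s 1 + 1),
        AddMonoidAlgebra.single ((s 0 : ℤ) - s 1 - t)
          (Polynomial.C c * Polynomial.X ^ t * ((s 1).choose t : Polynomial ℂ)) := by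
  set i := s 0 with hi
  set j := s 1 with hj
  have h2 : ((T (-1) + LC Polynomial.X * T (-2) : LPx)) ^ j
      = ∑ t ∈ Finset.range (j + 1),
          AddMonoidAlgebra.single (-(j : ℤ) - t)
            (Polynomial.X ^ t * ((j).choose t : Polynomial ℂ)) := by
    rw [add_comm, add_pow]
    refine Finset.sum_congr rfl fun t ht => ?_
    have htj : t ≤ j := Nat.lt_succ_iff.mp (Finset.mem_range.mp ht)
    have hT : (T ((t : ℤ) * (-2)) : LPx) * T (((j - t : ℕ) : ℤ) * (-1)) = T (-(j : ℤ) - t) := by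
      rw [← T_add]
      congr 1
      have hc : ((j - t : ℕ) : ℤ) = (j : ℤ) - t := by omega
      rw [hc]; ring
    calc (LC Polynomial.X * T (-2) : LPx) ^ t * T (-1) ^ (j - t) * ((j.choose t : ℕ) : LPx)
        = LC (Polynomial.X ^ t) * LC ((j.choose t : ℕ) : Polynomial ℂ)
            * (T ((t : ℤ) * (-2)) * T (((j - t : ℕ) : ℤ) * (-1))) := by
          rw [mul_pow, ← map_pow, T_pow, T_pow, ← map_natCast LC (j.choose t)]
          push_cast
          ring
      _ = LC (Polynomial.X ^ t * ((j.choose t : ℕ) : Polynomial ℂ)) * T (-(j : ℤ) - t) := by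
          rw [hT, ← map_mul]
      _ = AddMonoidAlgebra.single (-(j : ℤ) - t)
            (Polynomial.X ^ t * ((j).choose t : Polynomial ℂ)) := by
          rw [single_eq_C_mul_T]
  have h1 : Phi (MvPolynomial.monomial s c) =
      algebraMap ℂ LPx c * ((T 1 : LPx) ^ i * (T (-1) + LC Polynomial.X * T (-2) : LPx) ^ j) := by
    rw [Phi, MvPolynomial.aeval_monomial, Finsupp.prod_fintype _ _ (fun a => pow_zero _),
      Fin.prod_univ_two]
    rfl
  rw [h1, h2, T_pow, mul_one, Finset.mul_sum, Finset.mul_sum]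
  refine Finset.sum_congr rfl fun t ht => ?_
  have halg : (algebraMap ℂ LPx c) = LC (Polynomial.C c) := rfl
  have hT2 : (T (i : ℤ) : LPx) * T (-(j : ℤ) - t) = T ((i : ℤ) - j - t) := by
    rw [← T_add]
    congr 1
    ring
  simp only [single_eq_C_mul_T, halg, map_mul]
  rw [← hT2]
  ring

lemma phi_monomial_coeff (s : Fin 2 →₀ ℕ) (c : ℂ) (k : ℤ) (m : ℕ) :
    ((Phi (MvPolynomial.monomial s c)).coeff k).coeff m =
      if (s 0 : ℤ) - (s 1 : ℤ) = k + m then c * ((s 1).choose m : ℂ) else 0 := by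
  rw [phi_monomial, AddMonoidAlgebra.coeff_sum, Finset.sum_apply', Polynomial.finset_sum_coeff]
  have hterm : ∀ t : ℕ, ((AddMonoidAlgebra.single ((s 0 : ℤ) - s 1 - t)
      (Polynomial.C c * Polynomial.X ^ t * ((s 1).choose t : Polynomial ℂ)) : LPx).coeff k).coeff m
      = if ((s 0 : ℤ) - s 1 - t = k) ∧ m = t then c * ((s 1).choose t : ℂ) else 0 := by
    intro t
    rw [AddMonoidAlgebra.coeff_single, Finsupp.single_apply]
    rw [apply_ite (fun p : ℂ[X] => p.coeff m)]
    have : (Polynomial.C c * Polynomial.X ^ t * ((s 1).choose t : ℂ[X])).coeff m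
        = if m = t then c * ((s 1).choose t : ℂ) else 0 := by
      rw [← Polynomial.C_eq_natCast, mul_right_comm, ← Polynomial.C_mul,
        Polynomial.coeff_C_mul, Polynomial.coeff_X_pow, mul_ite, mul_one, mul_zero]
    rw [this, Polynomial.coeff_zero]
    by_cases h1 : (s 0 : ℤ) - s 1 - t = k <;> by_cases h2 : m = t <;> simp [h1, h2]
  simp_rw [hterm]
  rw [Finset.sum_eq_single m]
  · simp only [and_true]
    exact if_congr (by omega) rfl rfl
  · intro t _ hne
    rw [if_neg]
    rintro ⟨-, h⟩
    exact hne h.symm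
  · intro hm
    have hlt : s 1 < m := by
      have := Finset.mem_range.not.mp hm
      omega
    rw [Nat.choose_eq_zero_of_lt hlt]
    simp

/-- The "diagonal" polynomial `P_e = ∑_{i-j=e} c_{ij} (1+w)^j`. -/
def Pe (f : Pxy) (e : ℤ) : ℂ[X] :=
  ∑ s ∈ f.support,
    if (s 0 : ℤ) - (s 1 : ℤ) = e then (MvPolynomial.coeff s f) • (1 + Polynomial.X) ^ (s 1) else 0

lemma Pe_coeff (f : Pxy) (e : ℤ) (m : ℕ) :
    (Pe f e).coeff m = ∑ s ∈ f.support,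
      if (s 0 : ℤ) - (s 1 : ℤ) = e then MvPolynomial.coeff s f * ((s 1).choose m : ℂ) else 0 := by
  rw [Pe, Polynomial.finset_sum_coeff]
  refine Finset.sum_congr rfl fun s _ => ?_
  rw [apply_ite (fun p : ℂ[X] => p.coeff m), Polynomial.coeff_smul,
    Polynomial.coeff_one_add_X_pow, Polynomial.coeff_zero, smul_eq_mul]

lemma phi_coeff (f : Pxy) (k : ℤ) (m : ℕ) :
    ((Phi f).coeff k).coeff m = (Pe f (k + m)).coeff m := by
  conv_lhs => rw [f.as_sum]
  rw [map_sum, AddMonoidAlgebra.coeff_sum, Finset.sum_apply', Polynomial.finset_sum_coeff, Pe_coeff]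
  exact Finset.sum_congr rfl fun s _ => phi_monomial_coeff s _ k m

lemma fin2_eq (s t : Fin 2 →₀ ℕ) (h0 : s 0 = t 0) (h1 : s 1 = t 1) : s = t := by
  ext a
  fin_cases a
  · exact h0
  · exact h1

lemma deg1_le_totalDegree {f : Pxy} {s : Fin 2 →₀ ℕ} (hs : s ∈ f.support) :
    s 1 ≤ f.totalDegree := by
  refine le_trans ?_ (MvPolynomial.le_totalDegree hs)
  rw [Finsupp.sum_fintype _ _ (fun a => rfl), Fin.sum_univ_two]
  omega

/-- Main lemma: every nonzero `f` has a nonzero coefficient at some exponent `≥ -deg f`. -/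
lemma phi_main (f : Pxy) (hf : f ≠ 0) :
    ∃ k : ℤ, -(f.totalDegree : ℤ) ≤ k ∧ (Phi f).coeff k ≠ 0 := by
  classical
  obtain ⟨s₀, hs₀⟩ := MvPolynomial.support_nonempty.mpr hf
  set e : ℤ := (s₀ 0 : ℤ) - s₀ 1 with he
  set S : Finset (Fin 2 →₀ ℕ) := f.support.filter (fun s => (s 0 : ℤ) - (s 1 : ℤ) = e) with hSdef
  have hs₀S : s₀ ∈ S := by
    rw [hSdef, Finset.mem_filter]; exact ⟨hs₀, rfl⟩
  have hSsupp : ∀ s ∈ S, s ∈ f.support := fun s hs => (Finset.mem_filter.mp hs).1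
  have hSe : ∀ s ∈ S, (s 0 : ℤ) - s 1 = e := fun s hs => (Finset.mem_filter.mp hs).2
  have hinj : ∀ s ∈ S, ∀ t ∈ S, s 1 = t 1 → s = t := by
    intro s hs t ht h1
    have h0 : s 0 = t 0 := by
      have := hSe s hs; have := hSe t ht; omega
    exact fin2_eq s t h0 h1
  set P : ℂ[X] := Pe f e with hP
  have hPcoeff : ∀ m : ℕ, P.coeff m = ∑ s ∈ S, MvPolynomial.coeff s f * ((s 1).choose m : ℂ) := by
    intro m
    rw [hP, Pe_coeff, hSdef, Finset.sum_filter]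
  -- maximal j on the diagonal
  obtain ⟨sJ, hsJS, hsJmax⟩ := S.exists_max_image (fun s => s 1) ⟨s₀, hs₀S⟩
  have hPJ : P.coeff (sJ 1) = MvPolynomial.coeff sJ f := by
    rw [hPcoeff]
    rw [Finset.sum_eq_single_of_mem sJ hsJS]
    · simp
    · intro t htS htne
      have hlt : t 1 < sJ 1 := by
        rcases lt_or_eq_of_le (hsJmax t htS) with h | h
        · exact h
        · exact absurd (hinj t htS sJ hsJS h) htne
      simp [Nat.choose_eq_zero_of_lt hlt]
  have hcJ : MvPolynomial.coeff sJ f ≠ 0 := MvPolynomial.mem_support_iff.mp (hSsupp sJ hsJS)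
  have hPne : P ≠ 0 := fun h => hcJ (by rw [← hPJ, h, Polynomial.coeff_zero])
  have hnd : P.natDegree ≤ f.totalDegree := by
    rw [Polynomial.natDegree_le_iff_coeff_eq_zero]
    intro N hN
    rw [hPcoeff]
    refine Finset.sum_eq_zero fun s hs => ?_
    have : s 1 < N := lt_of_le_of_lt (deg1_le_totalDegree (hSsupp s hs)) hN
    simp [Nat.choose_eq_zero_of_lt this]
  -- minimal j on the diagonal
  obtain ⟨t₀, ht₀S, ht₀min⟩ := S.exists_min_image (fun s => s 1) ⟨s₀, hs₀S⟩
  set jm : ℕ := t₀ 1 with hjm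
  have hdvd : (1 + Polynomial.X : ℂ[X]) ^ jm ∣ P := by
    rw [hP, Pe]
    refine Finset.dvd_sum fun s hs => ?_
    by_cases hd : (s 0 : ℤ) - (s 1 : ℤ) = e
    · rw [if_pos hd]
      rw [Polynomial.smul_eq_C_mul]
      have hsS : s ∈ S := by rw [hSdef, Finset.mem_filter]; exact ⟨hs, hd⟩
      exact Dvd.dvd.mul_left (pow_dvd_pow _ (ht₀min s hsS)) _
    · rw [if_neg hd]; exact dvd_zero _
  obtain ⟨Q, hQ⟩ := hdvd
  have h1X : (1 + Polynomial.X : ℂ[X]) ≠ 0 := by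
    intro h
    have := congrArg (fun p : ℂ[X] => p.coeff 0) h
    simp at this
  have hQne : Q ≠ 0 := by
    intro h; rw [h, mul_zero] at hQ; exact hPne hQ
  have h1Xdeg : (1 + Polynomial.X : ℂ[X]).natDegree = 1 := by
    compute_degree!
  set v : ℕ := P.natTrailingDegree with hv
  have hvcoeff : P.coeff v ≠ 0 := fun h => hPne (Polynomial.coeff_natTrailingDegree_eq_zero.mp h)
  have hvle : v + jm ≤ P.natDegree := by
    have hntd : v = Q.natTrailingDegree := by
      rw [hv, hQ, Polynomial.natTrailingDegree_mul (pow_ne_zero _ h1X) hQne]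
      have : ((1 + Polynomial.X : ℂ[X]) ^ jm).natTrailingDegree = 0 := by
        refine Polynomial.natTrailingDegree_eq_zero_of_constantCoeff_ne_zero ?_
        rw [Polynomial.constantCoeff_apply, Polynomial.coeff_one_add_X_pow]
        simp
      rw [this, zero_add]
    have hndeg : P.natDegree = jm + Q.natDegree := by
      rw [hQ, Polynomial.natDegree_mul (pow_ne_zero _ h1X) hQne,
        Polynomial.natDegree_pow, h1Xdeg, mul_one]
    have := Polynomial.natTrailingDegree_le_natDegree Q
    omega
  -- the witness
  refine ⟨e - v, ?_, ?_⟩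
  · have he0 : (t₀ 0 : ℤ) - jm = e := hSe t₀ ht₀S
    have ht00 : (0 : ℤ) ≤ (t₀ 0 : ℤ) := Int.ofNat_nonneg _
    omega
  · intro hzero
    have := phi_coeff f (e - v) v
    rw [hzero] at this
    simp only [Finsupp.coe_zero, Pi.zero_apply, Polynomial.coeff_zero] at this
    have heq : e - v + v = e := by ring
    rw [heq] at this
    exact hvcoeff this.symm

lemma degset_eq (h : LPx) : {k : ℤ | h.coeff k ≠ 0} = ↑h.coeff.support := by
  ext k; simp [Finsupp.mem_support_iff]

lemma bddAbove_degset (h : LPx) : BddAbove {k : ℤ | h.coeff k ≠ 0} := by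
  rw [degset_eq]
  exact h.coeff.support.finite_toSet.bddAbove

lemma le_degx {h : LPx} {k : ℤ} (hk : h.coeff k ≠ 0) : k ≤ degx h :=
  le_csSup (bddAbove_degset h) hk

lemma phi_X1 : Phi (MvPolynomial.X 1) = T (-1) + LaurentPolynomial.C Polynomial.X * T (-2) := by
  rw [Phi, MvPolynomial.aeval_X]
  rfl

lemma apply_TCX (k : ℤ) :
    (T (-1) + LaurentPolynomial.C Polynomial.X * T (-2) : LPx).coeff k
      = if k = -1 then 1 else if k = -2 then Polynomial.X else 0 := by
  rw [← single_eq_C_mul_T]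
  have hT : (T (-1) : LPx) = AddMonoidAlgebra.single (-1) 1 := rfl
  rw [hT, AddMonoidAlgebra.coeff_add, Finsupp.add_apply, AddMonoidAlgebra.coeff_single,
    AddMonoidAlgebra.coeff_single, Finsupp.single_apply, Finsupp.single_apply]
  by_cases h1 : k = -1 <;> by_cases h2 : k = -2 <;> simp [h1, h2, eq_comm]

lemma degx_phi_X1 : degx (Phi (MvPolynomial.X 1)) = -1 := by
  rw [phi_X1, degx]
  have hset : {k : ℤ | (T (-1) + LaurentPolynomial.C Polynomial.X * T (-2) : LPx).coeff k ≠ 0} = {-1, -2} := by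
    ext k
    rw [Set.mem_setOf_eq, apply_TCX]
    by_cases h1 : k = -1 <;> by_cases h2 : k = -2 <;>
      simp [h1, h2, Polynomial.X_ne_zero]
  rw [hset, csSup_pair]
  rfl

lemma degx_phi_X1_sub : degx (Phi (MvPolynomial.X 1) - T (-1)) = -2 := by
  have h : Phi (MvPolynomial.X 1) - T (-1) = (AddMonoidAlgebra.single (-2) Polynomial.X : LPx) := by
    rw [phi_X1, single_eq_C_mul_T]
    exact add_sub_cancel_left _ _
  rw [h, degx]
  have hset : {k : ℤ | (AddMonoidAlgebra.single (-2) Polynomial.X : LPx).coeff k ≠ 0} = {-2} := by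
    ext k
    rw [Set.mem_setOf_eq, AddMonoidAlgebra.coeff_single, Finsupp.single_apply]
    by_cases h2 : (-2 : ℤ) = k <;> simp [h2, Polynomial.X_ne_zero]
    omega
  rw [hset, csSup_singleton]

lemma X1_not_C : ¬ ∃ c : ℂ, (MvPolynomial.X 1 : Pxy) = MvPolynomial.C c := by
  rintro ⟨c, hc⟩
  have h1 := MvPolynomial.totalDegree_X (1 : Fin 2) (R := ℂ)
  rw [hc, MvPolynomial.totalDegree_C] at h1
  exact one_ne_zero h1.symm

lemma nonconst_ne_zero {f : Pxy} (hf : ¬ ∃ c : ℂ, f = MvPolynomial.C c) : f ≠ 0 := by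
  intro h
  exact hf ⟨0, by rw [h, map_zero]⟩

lemma nonconst_totalDegree_pos {f : Pxy} (hf : ¬ ∃ c : ℂ, f = MvPolynomial.C c) :
    0 < f.totalDegree := by
  rcases Nat.eq_zero_or_pos f.totalDegree with h | h
  · exfalso
    apply hf
    refine ⟨MvPolynomial.coeff 0 f, MvPolynomial.ext _ _ fun m => ?_⟩
    rw [MvPolynomial.coeff_C]
    by_cases hm : 0 = m
    · rw [if_pos hm, ← hm]
    · rw [if_neg hm]
      by_contra hne
      have hmem : m ∈ f.support := MvPolynomial.mem_support_iff.mpr hne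
      have hall := (MvPolynomial.totalDegree_eq_zero_iff _ f).mp h m hmem
      exact hm (Finsupp.ext fun a => hall a).symm
  · exact h

lemma part_a : ∀ f : Pxy, (¬ ∃ c : ℂ, f = MvPolynomial.C c) →
    -(f.totalDegree : ℤ) ≤ degx (Phi f) := by
  intro f hf
  obtain ⟨k, hk1, hk2⟩ := phi_main f (nonconst_ne_zero hf)
  exact le_trans hk1 (le_degx hk2)

end SkewAux

theorem skewness_identity_fails :
    Function.Injective Phi ∧
    -- (a) δ(f) ≥ -deg(f) for every nonconstant f ∈ ℂ[x,y]
    (∀ f : Pxy, (¬ ∃ c : ℂ, f = MvPolynomial.C c) →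
      -(f.totalDegree : ℤ) ≤ degx (Phi f)) ∧
    -- (b) δ(y) = -1, deg(y) = 1, and min{δ(f)/deg(f)} = -1
    degx (Phi (MvPolynomial.X 1)) = -1 ∧
    (MvPolynomial.X 1 : Pxy).totalDegree = 1 ∧
    IsLeast ratioSet (-1) ∧
    -- (c) deg_x(Φ(y) - x⁻¹) = -2, and the minimum in (b) is strictly greater than
    --     δ(y - x⁻¹)/deg(y - x⁻¹) = -2, where y - x⁻¹ is the last key form of δ
    degx (Phi (MvPolynomial.X 1) - LaurentPolynomial.T (-1)) = -2 ∧
    (∀ r : ℝ, IsLeast ratioSet r →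
      (degx (Phi (MvPolynomial.X 1) - LaurentPolynomial.T (-1)) : ℝ) < r) := by
  have hinj : Function.Injective Phi := by
    rw [injective_iff_map_eq_zero]
    intro f hf
    by_contra hne
    obtain ⟨k, _, hk⟩ := SkewAux.phi_main f hne
    rw [hf] at hk
    simp at hk
  have hleast : IsLeast ratioSet (-1) := by
    constructor
    · refine ⟨MvPolynomial.X 1, SkewAux.X1_not_C, ?_⟩
      rw [SkewAux.degx_phi_X1, MvPolynomial.totalDegree_X]
      norm_num
    · rintro r ⟨f, hf, rfl⟩
      have hd : 0 < f.totalDegree := SkewAux.nonconst_totalDegree_pos hf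
      have hdR : (0 : ℝ) < (f.totalDegree : ℝ) := by exact_mod_cast hd
      rw [le_div_iff₀ hdR]
      have := SkewAux.part_a f hf
      have : -(f.totalDegree : ℝ) ≤ (degx (Phi f) : ℝ) := by exact_mod_cast this
      linarith
  refine ⟨hinj, SkewAux.part_a, SkewAux.degx_phi_X1, MvPolynomial.totalDegree_X 1, hleast,
    SkewAux.degx_phi_X1_sub, ?_⟩
  intro r hr
  have : r = -1 := hr.unique hleast
  rw [this, SkewAux.degx_phi_X1_sub]
  norm_num
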